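/- arXiv:1407.8106 — 6 statements merged into one kernel-verified Lean document; each statement's English description precedes it below -/
import Mathlib

section
/- Let H be a group, let K₁ and K₂ be subgroups of H of finite indices k₁ and k₂ with gcd(k₁, k₂) = 1, and let K₁′ be a normal subgroup of H of index k₁. If K₁ ∩ K₂ = K₁′ ∩ K₂, then K₁ = K₁′. -/
/-- Let `H` be a group, let `K₁` and `K₂` be subgroups of `H` of finite indices `k₁` and `k₂`
with `gcd(k₁, k₂) = 1`, and let `K₁'` be a normal subgroup of `H` of index `k₁`.
If `K₁ ⊓ K₂ = K₁' ⊓ K₂`, then `K₁ = K₁'`. -/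
theorem eq_of_inf_eq_inf_of_coprime {H : Type*} [Group H] (K₁ K₂ K₁' : Subgroup H)
    (k₁ k₂ : ℕ) (hk₁ : k₁ ≠ 0) (hk₂ : k₂ ≠ 0)
    (h₁ : K₁.index = k₁) (h₂ : K₂.index = k₂) (hco : Nat.gcd k₁ k₂ = 1)
    [K₁'.Normal] (h₁' : K₁'.index = k₁)
    (h : K₁ ⊓ K₂ = K₁' ⊓ K₂) : K₁ = K₁' := by
  have e1 : K₁'.relIndex K₂ * k₂ = (K₁' ⊓ K₂).index := by
    rw [← h₂, ← Subgroup.inf_relIndex_right K₁' K₂,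
      Subgroup.relIndex_mul_index inf_le_right]
  have e2 : K₂.relIndex K₁ * k₁ = (K₁ ⊓ K₂).index := by
    rw [← h₁, ← Subgroup.inf_relIndex_right K₂ K₁,
      Subgroup.relIndex_mul_index inf_le_right, inf_comm]
  have e3 : K₂.relIndex K₁ * k₁ = K₁'.relIndex K₂ * k₂ := by rw [e1, e2, h]
  have hAk₁ : K₁'.relIndex K₂ ∣ k₁ := h₁' ▸ Subgroup.relIndex_dvd_index_of_normal K₁' K₂
  have hk₁A : k₁ ∣ K₁'.relIndex K₂ :=
    Nat.Coprime.dvd_of_dvd_mul_right hco (e3 ▸ Dvd.intro_left _ rfl)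
  have hAeq : K₁'.relIndex K₂ = k₁ := Nat.dvd_antisymm hAk₁ hk₁A
  have hBeq : K₂.relIndex K₁ = k₂ := by
    have : K₂.relIndex K₁ * k₁ = k₂ * k₁ := by rw [e3, hAeq, mul_comm]
    exact Nat.eq_of_mul_eq_mul_right (Nat.pos_of_ne_zero hk₁) this
  have hle : K₁ ⊓ K₂ ≤ K₁' := h ▸ inf_le_left
  have hC1 : K₁'.relIndex K₁ ∣ k₂ := by
    have h4 := Subgroup.relIndex_dvd_of_le_left K₁ hle
    rw [inf_comm, Subgroup.inf_relIndex_right K₂ K₁, hBeq] at h4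
    exact h4
  have hC2 : K₁'.relIndex K₁ ∣ k₁ := h₁' ▸ Subgroup.relIndex_dvd_index_of_normal K₁' K₁
  have hC : K₁'.relIndex K₁ = 1 :=
    Nat.eq_one_of_dvd_coprimes hco hC2 hC1
  have hle₁ : K₁ ≤ K₁' := Subgroup.relIndex_eq_one.mp hC
  have h5 : K₁.relIndex K₁' * k₁ = 1 * k₁ := by
    rw [one_mul, ← h₁', Subgroup.relIndex_mul_index hle₁, h₁, h₁']
  have h6 : K₁.relIndex K₁' = 1 := Nat.eq_of_mul_eq_mul_right (Nat.pos_of_ne_zero hk₁) h5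
  exact le_antisymm hle₁ (Subgroup.relIndex_eq_one.mp h6)
end

section
/- Let H be a group, let i be a positive integer, and suppose H has only finitely many normal subgroups of index i; write the distinct normal subgroups of index i as K₁, …, Kₘ. Let φ : H → H be an injective group homomorphism such that the image φ(H) has finite index in H and gcd([H : φ(H)], i) = 1. Then there exists a permutation π of {1, …, m} such that φ(Kⱼ) = K_{π(j)} ∩ φ(H) for all j ∈ {1, …, m}. -/
/-- Let `H` be a group, `i` a positive integer, and suppose the distinct normal subgroups of
index `i` in `H` are exactly `K 1, …, K m` (finitely many). Let `φ : H → H` be an injective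
group homomorphism whose image has finite index coprime to `i`. Then there is a permutation
`π` of `{1, …, m}` with `φ(K j) = K (π j) ∩ φ(H)` for all `j`. -/
theorem exists_perm_map_normal_subgroups {H : Type*} [Group H] (i : ℕ) (hi : 0 < i)
    (m : ℕ) (K : Fin m → Subgroup H) (hKinj : Function.Injective K)
    (hKnorm : ∀ j, (K j).Normal) (hKidx : ∀ j, (K j).index = i)
    (hKall : ∀ N : Subgroup H, N.Normal → N.index = i → ∃ j, N = K j)
    (φ : H →* H) (hφ : Function.Injective φ)
    (hfin : φ.range.index ≠ 0) (hco : Nat.gcd φ.range.index i = 1) :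
    ∃ π : Equiv.Perm (Fin m), ∀ j, (K j).map φ = K (π j) ⊓ φ.range := by
  set R := φ.range with hR
  have hco' : Nat.Coprime i R.index := Nat.Coprime.symm hco
  -- Key: any normal subgroup of index `i` has relative index `i` in `R`.
  have key : ∀ N : Subgroup H, N.Normal → N.index = i → N.relIndex R = i := by
    intro N hNn hNi
    haveI := hNn
    have h1 : N.relIndex R ∣ i := hNi ▸ Subgroup.relIndex_dvd_index_of_normal N R
    have h2 : i ∣ N.relIndex R * R.index := by
      have hd : N.index ∣ (N ⊓ R).index :=
        Subgroup.index_dvd_of_le (inf_le_left : N ⊓ R ≤ N)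
      rwa [← Subgroup.relIndex_mul_index (inf_le_right : N ⊓ R ≤ R),
        Subgroup.inf_relIndex_right, hNi] at hd
    exact Nat.dvd_antisymm h1 (hco'.dvd_of_dvd_mul_right h2)
  -- If `K a ⊓ R ≤ K b` then `K a ≤ K b`.
  have hle : ∀ a b : Fin m, K a ⊓ R ≤ K b → K a ≤ K b := by
    intro a b hab
    set A := K a with hA
    set B := K b with hB
    set D := A ⊓ B with hD
    have hDR : D ⊓ R = A ⊓ R := by
      apply le_antisymm
      · exact inf_le_inf_right R inf_le_left
      · exact le_inf (le_inf inf_le_left hab) inf_le_right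
    have hDrel : D.relIndex R = i := by
      rw [← Subgroup.inf_relIndex_right, hDR, Subgroup.inf_relIndex_right]
      exact key A (hKnorm a) (hKidx a)
    haveI := hKnorm b
    have ht : B.relIndex A ∣ i := (hKidx b) ▸ Subgroup.relIndex_dvd_index_of_normal B A
    have hDA : D.relIndex A = B.relIndex A := Subgroup.inf_relIndex_left A B
    have hDidx : D.index = B.relIndex A * i := by
      rw [← hKidx a, ← hDA]
      exact (Subgroup.relIndex_mul_index (inf_le_left : D ≤ A)).symm
    have e1 : D.relIndex R * R.index = (D ⊓ R).index := by
      rw [← Subgroup.inf_relIndex_right]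
      exact Subgroup.relIndex_mul_index (inf_le_right : D ⊓ R ≤ R)
    have e2 : (D ⊓ R).relIndex D * D.index = (D ⊓ R).index :=
      Subgroup.relIndex_mul_index (inf_le_left : D ⊓ R ≤ D)
    have hmul : D.relIndex R * R.index = (D ⊓ R).relIndex D * (B.relIndex A * i) := by
      rw [e1, ← e2, hDidx]
    rw [hDrel] at hmul
    have hmul' : i * R.index = i * ((D ⊓ R).relIndex D * B.relIndex A) := by
      rw [hmul]; ring
    have hRidx : R.index = (D ⊓ R).relIndex D * B.relIndex A :=
      Nat.eq_of_mul_eq_mul_left hi hmul'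
    have htn : B.relIndex A ∣ R.index := hRidx ▸ dvd_mul_left _ _
    have ht1 : B.relIndex A = 1 :=
      Nat.eq_one_of_dvd_coprimes hco' ht htn
    exact Subgroup.relIndex_eq_one.mp ht1
  -- The comap of each `K j` is again normal of index `i`.
  have hcomap : ∀ j : Fin m, ((K j).comap φ).Normal ∧ ((K j).comap φ).index = i := by
    intro j
    refine ⟨Subgroup.Normal.comap (hKnorm j) φ, ?_⟩
    rw [Subgroup.index_comap]
    exact key _ (hKnorm j) (hKidx j)
  choose θ hθ using fun j => hKall _ (hcomap j).1 (hcomap j).2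
  have hinj : Function.Injective θ := by
    intro a b hab
    have h1 : (K a).comap φ = (K b).comap φ := by rw [hθ a, hθ b, hab]
    have h2 : K a ⊓ R = K b ⊓ R := by
      have h3 := congrArg (Subgroup.map φ) h1
      rwa [Subgroup.map_comap_eq, Subgroup.map_comap_eq, inf_comm R, inf_comm R] at h3
    exact hKinj (le_antisymm (hle a b (h2 ▸ inf_le_left))
      (hle b a (h2 ▸ inf_le_left)))
  have hbij : Function.Bijective θ := Finite.injective_iff_bijective.mp hinj
  refine ⟨(Equiv.ofBijective θ hbij).symm, fun j => ?_⟩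
  have hθj : θ ((Equiv.ofBijective θ hbij).symm j) = j :=
    (Equiv.ofBijective θ hbij).apply_symm_apply j
  have hcom : (K ((Equiv.ofBijective θ hbij).symm j)).comap φ = K j := by
    rw [hθ, hθj]
  calc (K j).map φ = ((K ((Equiv.ofBijective θ hbij).symm j)).comap φ).map φ := by rw [hcom]
    _ = K ((Equiv.ofBijective θ hbij).symm j) ⊓ R := by
        rw [Subgroup.map_comap_eq, inf_comm]
end

section
/- Let H be a group, let i be a positive integer, and suppose H has only finitely many normal subgroups of index i. Let φ : H → H be an injective group homomorphism such that φ(H) has finite index in H and gcd([H : φ(H)], i) = 1. Then for every normal subgroup K of H of index i there exists an integer k > 0 such that φᵏ(K) ⊆ K. -/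
/-- Let `H` be a group, `i` a positive integer, and suppose `H` has only finitely many normal
subgroups of index `i`. Let `φ : H → H` be an injective group homomorphism such that `φ(H)`
has finite index in `H` and `gcd([H : φ(H)], i) = 1`. Then for every normal subgroup `K` of
`H` of index `i` there exists `k > 0` with `φᵏ(K) ⊆ K`. -/
theorem exists_pow_map_le_of_normal {H : Type*} [Group H] (i : ℕ) (hi : 0 < i)
    (hfin : {N : Subgroup H | N.Normal ∧ N.index = i}.Finite)
    (φ : H →* H) (hφ : Function.Injective φ)
    (hidx : φ.range.index ≠ 0) (hco : Nat.gcd φ.range.index i = 1) :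
    ∀ K : Subgroup H, K.Normal → K.index = i →
      ∃ k : ℕ, 0 < k ∧ ∀ x ∈ K, (⇑φ)^[k] x ∈ K := by
  set S := {N : Subgroup H | N.Normal ∧ N.index = i} with hS
  -- every element of S has relative index i in the range of φ
  have hrel : ∀ N ∈ S, N.relIndex φ.range = i := by
    rintro N ⟨hN, hNi⟩
    haveI := hN
    have h1 : N.relIndex φ.range ∣ i := by
      have := Subgroup.relIndex_dvd_index_of_normal N φ.range
      rwa [hNi] at this
    have h2 : i ∣ N.relIndex φ.range * φ.range.index := by
      have h3 : (N ⊓ φ.range).relIndex φ.range * φ.range.index = (N ⊓ φ.range).index :=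
        Subgroup.relIndex_mul_index inf_le_right
      rw [Subgroup.inf_relIndex_right] at h3
      rw [h3, ← hNi]
      exact Subgroup.index_dvd_of_le inf_le_left
    exact Nat.dvd_antisymm h1 ((Nat.Coprime.symm hco).dvd_of_dvd_mul_right h2)
  -- comap φ maps S into S
  have hcomap : ∀ N ∈ S, Subgroup.comap φ N ∈ S := by
    rintro N hN
    refine ⟨hN.1.comap φ, ?_⟩
    rw [Subgroup.index_comap]
    exact hrel N hN
  -- key monotonicity: if A ⊓ range ≤ B for A, B ∈ S, then A ≤ B
  have key : ∀ A ∈ S, ∀ B ∈ S, A ⊓ φ.range ≤ B → A ≤ B := by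
    rintro A ⟨hA, hAi⟩ B ⟨hB, hBi⟩ hle
    haveI := hB
    have hAB : A ⊓ φ.range ≤ A ⊓ B := le_inf inf_le_left hle
    have h1 : (A ⊓ B).index ∣ (A ⊓ φ.range).index := Subgroup.index_dvd_of_le hAB
    have h2 : (A ⊓ φ.range).index = i * φ.range.index := by
      rw [← Subgroup.relIndex_mul_index (inf_le_right : A ⊓ φ.range ≤ φ.range),
        Subgroup.inf_relIndex_right, hrel A ⟨hA, hAi⟩]
    have h3 : (A ⊓ B).index = B.relIndex A * i := by
      rw [← Subgroup.relIndex_mul_index (inf_le_left : A ⊓ B ≤ A),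
        Subgroup.inf_relIndex_left, hAi]
    have h4 : B.relIndex A ∣ i := by
      have := Subgroup.relIndex_dvd_index_of_normal B A
      rwa [hBi] at this
    have h5 : B.relIndex A ∣ φ.range.index := by
      rw [h3, h2, mul_comm i φ.range.index] at h1
      exact (Nat.mul_dvd_mul_iff_right hi).mp h1
    have h6 : B.relIndex A = 1 := Nat.dvd_one.mp (hco ▸ Nat.dvd_gcd h5 h4)
    exact Subgroup.relIndex_eq_one.mp h6
  -- comap φ is injective on S
  have hinj : ∀ N ∈ S, ∀ N' ∈ S, Subgroup.comap φ N = Subgroup.comap φ N' → N = N' := by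
    intro N hN N' hN' h
    have hR : φ.range ⊓ N = φ.range ⊓ N' := by
      have := congrArg (Subgroup.map φ) h
      rwa [Subgroup.map_comap_eq, Subgroup.map_comap_eq] at this
    have l1 : N ≤ N' := key N hN N' hN' (by rw [inf_comm, hR]; exact inf_le_right)
    have l2 : N' ≤ N := key N' hN' N hN (by rw [inf_comm, ← hR]; exact inf_le_right)
    exact le_antisymm l1 l2
  intro K hK hKi
  haveI : Finite S := hfin.to_subtype
  set F : S → S := fun N => ⟨Subgroup.comap φ N.1, hcomap N.1 N.2⟩ with hF
  have hFinj : Function.Injective F := by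
    rintro ⟨N, hN⟩ ⟨N', hN'⟩ h
    exact Subtype.ext (hinj N hN N' hN' (congrArg Subtype.val h))
  -- membership under iterates of F
  have hmem : ∀ j (N : S) (x : H), x ∈ (F^[j] N).1 ↔ (⇑φ)^[j] x ∈ N.1 := by
    intro j
    induction j with
    | zero => intro N x; simp
    | succ j ih =>
      intro N x
      rw [Function.iterate_succ_apply, Function.iterate_succ_apply', ih (F N)]
      exact Iff.rfl
  set x0 : S := ⟨K, hK, hKi⟩ with hx0
  obtain ⟨a, b, hab, heq⟩ : ∃ a b : ℕ, a < b ∧ F^[a] x0 = F^[b] x0 := by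
    obtain ⟨a, b, hne, heq⟩ := Finite.exists_ne_map_eq_of_infinite (fun j : ℕ => F^[j] x0)
    rcases hne.lt_or_gt with h | h
    · exact ⟨a, b, h, heq⟩
    · exact ⟨b, a, h, heq.symm⟩
  have hk : x0 = F^[b - a] x0 := by
    have h2 : F^[a] x0 = F^[a] (F^[b - a] x0) := by
      rw [← Function.iterate_add_apply, Nat.add_sub_cancel' hab.le]
      exact heq
    exact hFinj.iterate a h2
  refine ⟨b - a, Nat.sub_pos_of_lt hab, fun x hx => ?_⟩
  have hx' : x ∈ (F^[b - a] x0).1 := by rw [← hk]; exact hx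
  exact (hmem (b - a) x0 x).mp hx'
end

section
/- Let L be a lattice in ℚⁿ, i.e. an additive subgroup of ℚⁿ generated by a ℚ-basis of ℚⁿ. Then there exist finitely many primes p₁, …, p_l such that: for every invertible matrix A ∈ GL(n, ℚ) with A(ℤⁿ) ⊆ ℤⁿ and with pⱼ ∤ det(A) for all j ∈ {1, …, l}, there exists an integer k > 0 such that Aᵏ(L) ⊆ L. -/
private lemma den_clear (q : ℚ) (M : ℕ) (h : q.den ∣ M) : ∃ m : ℤ, (M : ℚ) * q = (m : ℤ) := by
  obtain ⟨c, hc⟩ := h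
  refine ⟨c * q.num, ?_⟩
  have hq : (q.den : ℚ) * q = (q.num : ℚ) := by
    rw [mul_comm]
    exact_mod_cast Rat.mul_den_eq_num q
  subst hc
  push_cast
  rw [mul_comm (q.den : ℚ) (c : ℚ), mul_assoc, hq]

/-- Let `L` be a lattice in `ℚⁿ`, i.e. the additive subgroup generated by a `ℚ`-basis of `ℚⁿ`.
Then there exist finitely many primes `p₁, …, p_l` such that for every `A ∈ GL(n, ℚ)` with
`A(ℤⁿ) ⊆ ℤⁿ` and `pⱼ ∤ det A` for all `j`, there is `k > 0` with `Aᵏ(L) ⊆ L`. -/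
theorem exists_primes_pow_maps_lattice (n : ℕ) (b : Module.Basis (Fin n) ℚ (Fin n → ℚ))
    (L : AddSubgroup (Fin n → ℚ)) (hL : L = AddSubgroup.closure (Set.range b)) :
    ∃ (l : ℕ) (p : Fin l → ℕ), (∀ j, (p j).Prime) ∧
      ∀ A : GL (Fin n) ℚ,
        (∀ v : Fin n → ℚ, (∀ i, ∃ m : ℤ, v i = (m : ℚ)) →
          ∀ i, ∃ m : ℤ, (A : Matrix (Fin n) (Fin n) ℚ).mulVec v i = (m : ℚ)) →
        (∀ d : ℤ, (A : Matrix (Fin n) (Fin n) ℚ).det = (d : ℚ) → ∀ j, ¬ ((p j : ℤ) ∣ d)) →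
        ∃ k : ℕ, 0 < k ∧ ∀ v ∈ L,
          ((A ^ k : GL (Fin n) ℚ) : Matrix (Fin n) (Fin n) ℚ).mulVec v ∈ L := by
  classical
  -- N clears denominators of entries of the basis vectors
  set N : ℕ := ∏ x : Fin n × Fin n, (b x.1 x.2).den with hNdef
  have hNpos : 0 < N := Finset.prod_pos (fun x _ => (b x.1 x.2).pos)
  have hNint : ∀ i j, ∃ m : ℤ, (N : ℚ) * b i j = (m : ℚ) := fun i j =>
    den_clear _ _ (Finset.dvd_prod_of_mem _ (Finset.mem_univ ((i, j) : Fin n × Fin n)))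
  -- M clears denominators of the coordinates of standard basis vectors
  set c : Fin n → Fin n → ℚ := fun i t => b.repr (Pi.single i 1) t with hcdef
  set M : ℕ := ∏ x : Fin n × Fin n, (c x.1 x.2).den with hMdef
  have hMpos : 0 < M := Finset.prod_pos (fun x _ => (c x.1 x.2).pos)
  have hMint : ∀ i t, ∃ m : ℤ, (M : ℚ) * c i t = (m : ℚ) := fun i t =>
    den_clear _ _ (Finset.dvd_prod_of_mem _ (Finset.mem_univ ((i, t) : Fin n × Fin n)))
  set D : ℕ := N * M with hDdef
  have hDpos : 0 < D := Nat.mul_pos hNpos hMpos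
  -- the primes
  refine ⟨D.primeFactors.card, fun j => (D.primeFactors.equivFin.symm j : ℕ),
    fun j => Nat.prime_of_mem_primeFactors (D.primeFactors.equivFin.symm j).2, ?_⟩
  have hps : ∀ q : ℕ, q.Prime → q ∣ D → ∃ j, ((D.primeFactors.equivFin.symm j : ℕ)) = q := by
    intro q hq hqd
    refine ⟨D.primeFactors.equivFin ⟨q, Nat.mem_primeFactors.mpr ⟨hq, hqd, hDpos.ne'⟩⟩, ?_⟩
    simp
  -- Lemma A : N * v is integral for v ∈ L
  have hLN : ∀ v ∈ L, ∀ i, ∃ m : ℤ, (N : ℚ) * v i = (m : ℚ) := by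
    intro v hv
    rw [hL] at hv
    induction hv using AddSubgroup.closure_induction with
    | mem x hx =>
      obtain ⟨j, rfl⟩ := hx
      exact hNint j
    | zero => intro i; exact ⟨0, by simp⟩
    | add x y hx hy ihx ihy =>
      intro i
      obtain ⟨mx, hx'⟩ := ihx i
      obtain ⟨my, hy'⟩ := ihy i
      exact ⟨mx + my, by push_cast [Pi.add_apply]; rw [mul_add, hx', hy']⟩
    | neg x hx ihx =>
      intro i
      obtain ⟨mx, hx'⟩ := ihx i
      exact ⟨-mx, by push_cast [Pi.neg_apply]; rw [mul_neg, hx']⟩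
  -- Lemma B : M * (integer vector) lies in L
  have hsingle : ∀ j : Fin n, ((M : ℚ) • (Pi.single j (1 : ℚ) : Fin n → ℚ)) ∈ L := by
    intro j
    have hrep := b.sum_repr (Pi.single j (1 : ℚ))
    have : (M : ℚ) • (Pi.single j (1 : ℚ) : Fin n → ℚ) = ∑ t, ((M : ℚ) * c j t) • b t := by
      rw [← hrep, Finset.smul_sum]
      refine Finset.sum_congr rfl fun t _ => ?_
      rw [smul_smul]
    rw [hL, this]
    refine AddSubgroup.sum_mem _ fun t _ => ?_
    obtain ⟨m, hm⟩ := hMint j t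
    rw [hm, Int.cast_smul_eq_zsmul ℚ m (b t)]
    exact AddSubgroup.zsmul_mem _ (AddSubgroup.subset_closure (Set.mem_range_self t)) m
  have hMZ : ∀ u : Fin n → ℤ, (fun i => (M : ℚ) * (u i : ℚ)) ∈ L := by
    intro u
    have he : (fun i => (M : ℚ) * (u i : ℚ)) =
        ∑ j, u j • ((M : ℚ) • (Pi.single j (1 : ℚ) : Fin n → ℚ)) := by
      funext i
      simp [Finset.sum_apply, Pi.single_apply, mul_comm]
    rw [he]
    exact AddSubgroup.sum_mem _ fun j _ => AddSubgroup.zsmul_mem _ (hsingle j) _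
  -- main part
  intro A hA hdet
  -- A has integer entries
  have hAint : ∀ i j, ∃ m : ℤ, (A : Matrix (Fin n) (Fin n) ℚ) i j = (m : ℚ) := by
    intro i j
    have h1 : ∀ t, ∃ m : ℤ, (Pi.single j (1 : ℚ) : Fin n → ℚ) t = (m : ℚ) := by
      intro t
      rcases eq_or_ne j t with rfl | h
      · exact ⟨1, by simp⟩
      · exact ⟨0, by simp [Pi.single_apply, h]⟩
    have := hA (Pi.single j 1) h1 i
    simpa using this
  choose Bm hBm using hAint
  set B : Matrix (Fin n) (Fin n) ℤ := Matrix.of Bm with hBdef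
  have hAB : (A : Matrix (Fin n) (Fin n) ℚ) =
      B.map (Int.cast : ℤ → ℚ) := by
    ext i j
    simp [Matrix.map_apply, hBdef, hBm i j]
  have hdB : ((A : Matrix (Fin n) (Fin n) ℚ)).det = (B.det : ℚ) := by
    rw [hAB]
    exact ((Int.castRingHom ℚ).map_det B).symm
  -- determinant is coprime to D
  have hcopN : B.det.natAbs.Coprime D := by
    by_contra h
    obtain ⟨q, hq, hqd⟩ := Nat.exists_prime_and_dvd h
    obtain ⟨j, hj⟩ := hps q hq (hqd.trans (Nat.gcd_dvd_right _ _))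
    refine hdet B.det hdB j ?_
    show (((D.primeFactors.equivFin.symm j : ℕ)) : ℤ) ∣ B.det
    rw [hj]
    exact (Int.natCast_dvd_natCast.mpr (hqd.trans (Nat.gcd_dvd_left _ _))).trans
      (Int.natAbs_dvd.mpr dvd_rfl)
  haveI : NeZero D := ⟨hDpos.ne'⟩
  have hcop : IsUnit ((B.det : ZMod D)) := by
    have h1 : IsUnit ((B.det.natAbs : ZMod D)) := (ZMod.isUnit_iff_coprime _ _).mpr hcopN
    rcases Int.natAbs_eq B.det with h | h
    · rw [h, Int.cast_natCast]; exact h1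
    · rw [h, Int.cast_neg, Int.cast_natCast]; exact h1.neg
  -- B mod D is invertible, hence of finite order
  have hBu : IsUnit ((Int.castRingHom (ZMod D)).mapMatrix B) := by
    rw [Matrix.isUnit_iff_isUnit_det]
    have : ((Int.castRingHom (ZMod D)).mapMatrix B).det = ((B.det : ZMod D)) := by
      simpa using ((Int.castRingHom (ZMod D)).map_det B).symm
    rw [this]
    exact hcop
  obtain ⟨u, hu⟩ := hBu
  refine ⟨orderOf u, orderOf_pos u, ?_⟩
  set k := orderOf u with hk
  have hBk : ((Int.castRingHom (ZMod D)).mapMatrix (B ^ k)) = 1 := by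
    rw [map_pow, ← hu, ← Units.val_pow_eq_pow_val, pow_orderOf_eq_one, Units.val_one]
  have hcong : ∀ i j, (D : ℤ) ∣ ((B ^ k - 1) i j) := by
    intro i j
    rw [← ZMod.intCast_zmod_eq_zero_iff_dvd]
    have h2 : ((Int.castRingHom (ZMod D)).mapMatrix (B ^ k - 1)) = 0 := by
      rw [map_sub, hBk, map_one, sub_self]
    have h3 := congrFun (congrFun (congrArg (fun X => (X : Matrix (Fin n) (Fin n) (ZMod D))) h2) i) j
    simpa [RingHom.mapMatrix_apply, Matrix.map_apply] using h3
  choose C hC using hcong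
  -- final computation
  intro v hv
  choose w hw using hLN v hv
  have hpow : ((A ^ k : GL (Fin n) ℚ) : Matrix (Fin n) (Fin n) ℚ)
      = (Int.castRingHom ℚ).mapMatrix (B ^ k) := by
    rw [Units.val_pow_eq_pow_val, hAB, map_pow]
    rfl
  have hsplit : ((A ^ k : GL (Fin n) ℚ) : Matrix (Fin n) (Fin n) ℚ).mulVec v
      = v + (fun i => (M : ℚ) * ((∑ j, C i j * w j : ℤ) : ℚ)) := by
    funext i
    rw [hpow]
    simp only [RingHom.mapMatrix_apply, Matrix.mulVec, dotProduct,
      Matrix.map_apply, Pi.add_apply]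
    have hBk1 : ∀ x, ((B ^ k) i x : ℚ) = (if i = x then 1 else 0) + (D : ℚ) * (C i x : ℚ) := by
      intro x
      have h0 := hC i x
      rw [Matrix.sub_apply, Matrix.one_apply, sub_eq_iff_eq_add] at h0
      rw [h0]
      push_cast [apply_ite (Int.cast : ℤ → ℚ)]
      rw [add_comm]
    have e1 : ∀ x, ((Int.castRingHom ℚ) ((B ^ k) i x)) * v x
        = (if i = x then 1 else 0) * v x + (M : ℚ) * ((C i x : ℚ) * ((N : ℚ) * v x)) := by
      intro x
      rw [show ((Int.castRingHom ℚ) ((B ^ k) i x)) = (((B ^ k) i x : ℤ) : ℚ) from rfl, hBk1 x]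
      have : ((D : ℕ) : ℚ) = (N : ℚ) * (M : ℚ) := by rw [hDdef]; push_cast; ring
      rw [this]
      ring
    rw [Finset.sum_congr rfl fun x _ => e1 x, Finset.sum_add_distrib]
    have e2 : ∑ x, (if i = x then 1 else 0) * v x = v i := by
      simp [Finset.sum_ite_eq]
    have e3 : ∑ x, (M : ℚ) * ((C i x : ℚ) * ((N : ℚ) * v x))
        = (M : ℚ) * ((∑ j, C i j * w j : ℤ) : ℚ) := by
      rw [← Finset.mul_sum]
      congr 1
      push_cast
      refine Finset.sum_congr rfl fun x _ => ?_
      rw [hw x]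
    rw [e2, e3]
  rw [hsplit]
  exact AddSubgroup.add_mem _ hv (hMZ _)
end

section
/- Let L be a finite-dimensional Lie algebra over ℚ and let φ be a Lie algebra automorphism of L whose ℂ-linear extension is diagonalizable. Then there exists a Lie algebra automorphism η of L such that the characteristic polynomial of η splits over ℚ (all eigenvalues of η are rational), η commutes with every Lie algebra automorphism of L that commutes with φ, and moreover: if every complex root of the characteristic polynomial of φ has absolute value strictly greater than 1, then every complex root of the characteristic polynomial of η has absolute value strictly greater than 1. -/
open Polynomial

/-- The evaluation of the characteristic polynomial of a matrix. -/
lemma aux_matrix_eval_charpoly {n R : Type*} [CommRing R] [Fintype n] [DecidableEq n]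
    (M : Matrix n n R) (μ : R) :
    M.charpoly.eval μ = (μ • (1 : Matrix n n R) - M).det := by
  have h1 : (μ : R) • (1 : Matrix n n R) = Matrix.scalar n μ := by
    ext i j
    by_cases h : i = j <;> simp [Matrix.scalar_apply, Matrix.one_apply, Matrix.diagonal, h]
  rw [Matrix.charpoly, eval_det, Matrix.matPolyEquiv_charmatrix, h1]
  simp

/-- Every root of the characteristic polynomial of an endomorphism of a finite-dimensional
vector space is an eigenvalue. -/
lemma aux_hasEigenvalue_of_isRoot_charpoly {K V : Type*} [Field K] [AddCommGroup V] [Module K V]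
    [FiniteDimensional K V] {g : Module.End K V} {μ : K} (h : g.charpoly.IsRoot μ) :
    g.HasEigenvalue μ := by
  classical
  let b := Module.Free.chooseBasis K V
  have hdet : LinearMap.det (μ • (1 : Module.End K V) - g) = 0 := by
    have h2 : LinearMap.toMatrix b b (μ • (1 : Module.End K V) - g)
        = μ • (1 : Matrix _ _ K) - LinearMap.toMatrix b b g := by
      rw [map_sub, map_smul, LinearMap.toMatrix_one]
    rw [← LinearMap.det_toMatrix b, h2, ← aux_matrix_eval_charpoly,
      LinearMap.charpoly_toMatrix]
    exact h
  obtain ⟨x, hx, hx0⟩ := Submodule.exists_mem_ne_zero_of_ne_bot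
    (LinearMap.bot_lt_ker_of_det_eq_zero hdet).ne'
  have hgx : g x = μ • x := by
    have := hx
    rw [LinearMap.mem_ker, LinearMap.sub_apply, LinearMap.smul_apply,
      Module.End.one_apply, sub_eq_zero] at this
    exact this.symm
  exact Module.End.hasEigenvalue_of_hasEigenvector
    ⟨Module.End.mem_eigenspace_iff.2 hgx, hx0⟩

/-- A monic rational polynomial all of whose complex roots are rational splits over `ℚ`. -/
lemma aux_splits : ∀ (n : ℕ) (r : ℚ[X]), r.Monic → r.natDegree ≤ n →
    (∀ z : ℂ, (r.map (algebraMap ℚ ℂ)).IsRoot z → ∃ a : ℚ, algebraMap ℚ ℂ a = z) →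
    r.Splits := by
  intro n
  induction n with
  | zero =>
    intro r _ hd _
    exact Splits.of_natDegree_le_one (le_trans hd (by norm_num))
  | succ n ih =>
    intro r hm hd h
    by_cases hd0 : r.natDegree = 0
    · exact Splits.of_natDegree_le_one (by omega)
    · have hdeg : 0 < (r.map (algebraMap ℚ ℂ)).degree := by
        rw [degree_map]
        exact natDegree_pos_iff_degree_pos.1 (Nat.pos_of_ne_zero hd0)
      obtain ⟨z, hz⟩ := Complex.exists_root hdeg
      obtain ⟨a, ha⟩ := h z hz
      have hra : r.IsRoot a := by
        have h2 : (algebraMap ℚ ℂ) (r.eval a) = 0 := by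
          rw [← Polynomial.eval₂_at_apply, ← Polynomial.eval_map, ha]
          exact hz
        exact (_root_.map_eq_zero (algebraMap ℚ ℂ)).1 h2
      have hfac : (X - C a) * (r / (X - C a)) = r := (mul_div_eq_iff_isRoot).2 hra
      set r1 := r / (X - C a) with hr1
      have hm1 : r1.Monic := by
        have := hfac ▸ hm
        exact (monic_X_sub_C a).of_mul_monic_left this
      have hdeg1 : r1.natDegree ≤ n := by
        have hne : r1 ≠ 0 := hm1.ne_zero
        have := congrArg natDegree hfac
        rw [natDegree_mul (X_sub_C_ne_zero a) hne, natDegree_X_sub_C] at this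
        omega
      have hroots1 : ∀ z : ℂ, (r1.map (algebraMap ℚ ℂ)).IsRoot z →
          ∃ a : ℚ, algebraMap ℚ ℂ a = z := by
        intro w hw
        refine h w ?_
        rw [← hfac, Polynomial.map_mul, IsRoot, eval_mul, hw.eq_zero, mul_zero]
      have hs1 := ih r1 hm1 hdeg1 hroots1
      rw [← hfac]
      exact Splits.mul (Splits.X_sub_C _) hs1

/-- Anything commuting with `b` commutes with a polynomial in `b`. -/
lemma aux_commute {A : Type*} [Ring A] [Algebra ℚ A] {a b : A} (h : Commute a b) (p : ℚ[X]) :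
    Commute a (Polynomial.aeval b p) := by
  induction p using Polynomial.induction_on with
  | C q => simp only [aeval_C]; exact (Algebra.commutes q a).symm
  | add p q hp hq => simpa [map_add] using hp.add_right hq
  | monomial n q hq =>
    simp only [map_mul, aeval_C, map_pow, aeval_X]
    exact (Commute.symm (Algebra.commutes q a)).mul_right (h.pow_right _)

open Polynomial

/-- Given a rational polynomial `q` whose complex roots are all nonzero, there is a rational
polynomial `p₀` whose values at the complex roots of `q` are the (rational) Galois norms of the
roots: these values are rational, nonzero, multiplicative on roots, and of absolute value `> 1`
when all complex roots of `q` have absolute value `> 1`. -/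
lemma aux_one_lt_prod {ι : Type*} (s : Finset ι) (f : ι → ℝ)
    (h : ∀ i ∈ s, 1 < f i) (hs : s.Nonempty) : 1 < ∏ i ∈ s, f i := by
  classical
  induction s using Finset.cons_induction with
  | empty => exact absurd hs (by simp)
  | cons a s ha ih =>
    rw [Finset.prod_cons]
    rcases s.eq_empty_or_nonempty with rfl | hs'
    · simpa using h a (by simp)
    · have h1 : 1 < f a := h a (by simp)
      have h2 : 1 < ∏ i ∈ s, f i := ih (fun i hi => h i (by simp [hi])) hs'
      calc (1 : ℝ) < f a := h1
        _ = f a * 1 := (mul_one _).symm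
        _ < f a * ∏ i ∈ s, f i := by
            exact mul_lt_mul_of_pos_left h2 (lt_trans one_pos h1)

set_option maxHeartbeats 1000000 in
lemma aux_interp (q : ℚ[X]) (h0 : ¬ ((q.map (algebraMap ℚ ℂ)).IsRoot 0)) :
    ∃ p₀ : ℚ[X],
      (∀ z w : ℂ, (q.map (algebraMap ℚ ℂ)).IsRoot z → (q.map (algebraMap ℚ ℂ)).IsRoot w →
        (q.map (algebraMap ℚ ℂ)).IsRoot (z * w) →
        (p₀.map (algebraMap ℚ ℂ)).eval (z * w)
          = (p₀.map (algebraMap ℚ ℂ)).eval z * (p₀.map (algebraMap ℚ ℂ)).eval w) ∧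
      (∀ z : ℂ, (q.map (algebraMap ℚ ℂ)).IsRoot z →
        (∃ a : ℚ, algebraMap ℚ ℂ a = (p₀.map (algebraMap ℚ ℂ)).eval z) ∧
        (p₀.map (algebraMap ℚ ℂ)).eval z ≠ 0 ∧
        ((∀ y : ℂ, (q.map (algebraMap ℚ ℂ)).IsRoot y → 1 < ‖y‖) →
          1 < ‖(p₀.map (algebraMap ℚ ℂ)).eval z‖)) := by
  classical
  have hq0 : q ≠ 0 := by rintro rfl; exact h0 (by simp)
  have hsp : (q.map (algebraMap ℚ ℂ)).Splits := IsAlgClosed.splits _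
  set K : IntermediateField ℚ ℂ := IntermediateField.adjoin ℚ (q.rootSet ℂ) with hKdef
  haveI hKsf : Polynomial.IsSplittingField ℚ K q :=
    IntermediateField.adjoin_rootSet_isSplittingField hsp
  haveI : FiniteDimensional ℚ K := Polynomial.IsSplittingField.finiteDimensional K q
  haveI hnormal : Normal ℚ K := Normal.of_isSplittingField q
  haveI : Algebra.IsAlgebraic ℚ K := Algebra.IsAlgebraic.of_finite ℚ K
  haveI hgal : IsGalois ℚ K := { to_isSeparable := inferInstance, to_normal := hnormal }
  haveI : Fintype (K ≃ₐ[ℚ] K) := AlgEquiv.fintype ℚ K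
  haveI : Nonempty (K ≃ₐ[ℚ] K) := ⟨AlgEquiv.refl⟩
  -- root transfer between K and ℂ
  have hmapKC : (q.map (algebraMap ℚ K)).map (algebraMap K ℂ) = q.map (algebraMap ℚ ℂ) := by
    rw [Polynomial.map_map, ← IsScalarTower.algebraMap_eq]
  have hKC : ∀ {t : K}, (q.map (algebraMap ℚ K)).IsRoot t →
      (q.map (algebraMap ℚ ℂ)).IsRoot (algebraMap K ℂ t) := by
    intro t ht
    rw [← hmapKC, IsRoot, Polynomial.eval_map, Polynomial.eval₂_at_apply, ht.eq_zero, map_zero]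
  have hCK : ∀ {z : ℂ}, (q.map (algebraMap ℚ ℂ)).IsRoot z →
      ∃ t : K, algebraMap K ℂ t = z ∧ (q.map (algebraMap ℚ K)).IsRoot t := by
    intro z hz
    have hzK : z ∈ q.rootSet ℂ := by
      rw [Polynomial.mem_rootSet]
      exact ⟨hq0, by rwa [Polynomial.aeval_def, ← Polynomial.eval_map]⟩
    have hzmem : z ∈ K := IntermediateField.subset_adjoin ℚ _ hzK
    refine ⟨⟨z, hzmem⟩, rfl, ?_⟩
    have h2 : algebraMap K ℂ ((q.map (algebraMap ℚ K)).eval ⟨z, hzmem⟩) = 0 := by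
      rw [← Polynomial.eval₂_at_apply, ← Polynomial.eval_map, hmapKC]
      exact hz
    exact (RingHom.injective (algebraMap K ℂ)) (by rw [h2, map_zero])
  -- Galois action on roots
  have heval : ∀ (σ : K ≃ₐ[ℚ] K) (r : K[X]) (t : K),
      (r.map (σ : K →+* K)).eval (σ t) = σ (r.eval t) := by
    intro σ r t
    rw [Polynomial.eval_map]
    exact Polynomial.eval₂_at_apply _ t
  have hqKfix : ∀ σ : K ≃ₐ[ℚ] K, (q.map (algebraMap ℚ K)).map (σ : K →+* K)
      = q.map (algebraMap ℚ K) := by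
    intro σ
    rw [Polynomial.map_map]
    congr 1
    exact σ.toAlgHom.comp_algebraMap
  have hσroot : ∀ (σ : K ≃ₐ[ℚ] K) {t : K}, (q.map (algebraMap ℚ K)).IsRoot t →
      (q.map (algebraMap ℚ K)).IsRoot (σ t) := by
    intro σ t ht
    have := heval σ (q.map (algebraMap ℚ K)) t
    rw [hqKfix σ, ht.eq_zero, map_zero] at this
    exact this
  -- the Galois-norm function
  set vals : K → K := fun t => ∏ σ : K ≃ₐ[ℚ] K, σ t with hvals_def
  have hvals_mul : ∀ t s : K, vals (t * s) = vals t * vals s := by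
    intro t s
    simp [hvals_def, map_mul, Finset.prod_mul_distrib]
  have hvals_fix : ∀ (τ : K ≃ₐ[ℚ] K) (t : K), τ (vals t) = vals t := by
    intro τ t
    rw [hvals_def]
    dsimp only
    rw [map_prod]
    let E : (K ≃ₐ[ℚ] K) ≃ (K ≃ₐ[ℚ] K) :=
      ⟨fun σ => σ.trans τ, fun σ => σ.trans τ.symm,
        fun σ => by ext x; simp, fun σ => by ext x; simp⟩
    exact Equiv.prod_comp E (fun σ => σ t)
  have hvals_comp : ∀ (σ : K ≃ₐ[ℚ] K) (t : K), vals (σ t) = vals t := by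
    intro σ t
    rw [hvals_def]
    dsimp only
    let E : (K ≃ₐ[ℚ] K) ≃ (K ≃ₐ[ℚ] K) :=
      ⟨fun τ => σ.trans τ, fun τ => σ.symm.trans τ,
        fun τ => by ext x; simp, fun τ => by ext x; simp⟩
    exact Equiv.prod_comp E (fun σ' => σ' t)
  -- fixed elements are rational
  have hfix_rat : ∀ x : K, (∀ σ : K ≃ₐ[ℚ] K, σ x = x) → ∃ a : ℚ, algebraMap ℚ K a = x := by
    intro x hx
    have hmem : x ∈ IntermediateField.fixedField (⊤ : Subgroup (K ≃ₐ[ℚ] K)) := by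
      rintro ⟨σ, -⟩
      exact hx σ
    have htop : IntermediateField.fixedField (⊤ : Subgroup (K ≃ₐ[ℚ] K))
        = (⊥ : IntermediateField ℚ K) :=
      ((IsGalois.tfae (F := ℚ) (E := K)).out 0 1).mp hgal
    rw [htop] at hmem
    exact IntermediateField.mem_bot.1 hmem
  have hvals_rat : ∀ t : K, ∃ a : ℚ, algebraMap ℚ K a = vals t :=
    fun t => hfix_rat _ (fun σ => hvals_fix σ t)
  -- interpolation
  set S : Finset K := (q.map (algebraMap ℚ K)).roots.toFinset with hSdef
  have hSmem : ∀ {t : K}, t ∈ S ↔ (q.map (algebraMap ℚ K)).IsRoot t := by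
    intro t
    rw [hSdef, Multiset.mem_toFinset, Polynomial.mem_roots']
    exact ⟨fun h => h.2, fun h => ⟨Polynomial.map_ne_zero hq0, h⟩⟩
  have hSinj : Set.InjOn (id : K → K) S := fun a _ b _ h => h
  set p : K[X] := Lagrange.interpolate S id vals with hpdef
  have hpeval : ∀ t ∈ S, p.eval t = vals t := by
    intro t ht
    rw [hpdef]; exact Lagrange.eval_interpolate_at_node vals hSinj ht
  have hpdeg : p.degree < S.card := Lagrange.degree_interpolate_lt _ hSinj
  have hpfix : ∀ σ : K ≃ₐ[ℚ] K, p.map (σ : K →+* K) = p := by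
    intro σ
    refine (Lagrange.eq_interpolate_of_eval_eq _ hSinj ?_ ?_)
    · rwa [Polynomial.degree_map]
    · intro t ht
      have h1 : σ.symm t ∈ S := hSmem.2 (hσroot σ.symm (hSmem.1 ht))
      have h2 : (p.map (σ : K →+* K)).eval t = σ (p.eval (σ.symm t)) := by
        conv_lhs => rw [show t = σ (σ.symm t) by simp]
        rw [heval]
      simp only [id_eq]
      rw [h2, hpeval _ h1, hvals_fix σ, hvals_comp σ.symm]
  have hplifts : p ∈ Polynomial.lifts (algebraMap ℚ K) := by
    rw [Polynomial.lifts_iff_coeff_lifts]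
    intro n
    refine hfix_rat (p.coeff n) (fun σ => ?_)
    conv_rhs => rw [← hpfix σ]
    rw [Polynomial.coeff_map]
    rfl
  obtain ⟨p₀, hp₀⟩ := (Polynomial.mem_lifts _).1 hplifts
  have hPmap : p₀.map (algebraMap ℚ ℂ) = p.map (algebraMap K ℂ) := by
    rw [← hp₀, Polynomial.map_map, ← IsScalarTower.algebraMap_eq]
  -- evaluation of the interpolant at a complex root
  have hPeval : ∀ {z : ℂ}, (q.map (algebraMap ℚ ℂ)).IsRoot z →
      ∃ t : K, algebraMap K ℂ t = z ∧ t ∈ S ∧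
        (p₀.map (algebraMap ℚ ℂ)).eval z = algebraMap K ℂ (vals t) := by
    intro z hz
    obtain ⟨t, htz, ht⟩ := hCK hz
    refine ⟨t, htz, hSmem.2 ht, ?_⟩
    rw [hPmap, ← htz, Polynomial.eval_map, Polynomial.eval₂_at_apply, hpeval t (hSmem.2 ht)]
  refine ⟨p₀, ?_, ?_⟩
  · -- multiplicativity
    intro z w hz hw hzw
    obtain ⟨t, htz, htS, htev⟩ := hPeval hz
    obtain ⟨s, hsw, hsS, hsev⟩ := hPeval hw
    obtain ⟨u, huzw, huS, huev⟩ := hPeval hzw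
    have huts : u = t * s := by
      apply RingHom.injective (algebraMap K ℂ)
      rw [huzw, map_mul, htz, hsw]
    rw [huev, htev, hsev, huts, hvals_mul, map_mul]
  · -- rationality, nonvanishing, expansion
    intro z hz
    obtain ⟨t, htz, htS, htev⟩ := hPeval hz
    have hz0 : z ≠ 0 := by
      rintro rfl
      exact h0 hz
    have ht0 : t ≠ 0 := by
      rintro rfl
      rw [map_zero] at htz
      exact hz0 htz.symm
    have hσt0 : ∀ σ : K ≃ₐ[ℚ] K, σ t ≠ 0 := by
      intro σ hσ
      exact ht0 (by simpa using σ.injective (by simpa using hσ))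
    refine ⟨?_, ?_, ?_⟩
    · obtain ⟨a, ha⟩ := hvals_rat t
      refine ⟨a, ?_⟩
      rw [htev, ← ha, ← IsScalarTower.algebraMap_apply]
    · rw [htev]
      intro hcon
      have : vals t = 0 := RingHom.injective (algebraMap K ℂ) (by rw [hcon, map_zero])
      rw [hvals_def] at this
      obtain ⟨σ, _, hσ⟩ := Finset.prod_eq_zero_iff.1 this
      exact hσt0 σ hσ
    · intro hexp
      rw [htev, hvals_def]
      dsimp only
      rw [map_prod, norm_prod]
      have hgoal : ∀ σ : K ≃ₐ[ℚ] K, 1 < ‖(algebraMap K ℂ) (σ t)‖ :=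
        fun σ => hexp _ (hKC (hσroot σ (hSmem.1 htS)))
      exact aux_one_lt_prod (Finset.univ : Finset (K ≃ₐ[ℚ] K))
        (fun σ => ‖(algebraMap K ℂ) (σ t)‖)
        (fun σ _ => hgoal σ) Finset.univ_nonempty

open Polynomial
open scoped TensorProduct

set_option maxHeartbeats 1000000 in
/-- Let `L` be a finite-dimensional Lie algebra over `ℚ` and `φ` a Lie algebra automorphism of
`L` whose `ℂ`-linear extension is diagonalizable. Then there exists a Lie algebra automorphism
`η` of `L` whose characteristic polynomial splits over `ℚ`, which commutes with every
automorphism commuting with `φ`, and which is expanding whenever `φ` is expanding. -/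
theorem exists_rational_automorphism_commuting {L : Type*} [LieRing L] [LieAlgebra ℚ L]
    [Module.Finite ℚ L] (φ : L ≃ₗ⁅ℚ⁆ L)
    (hdiag : ⨆ μ : ℂ,
      Module.End.eigenspace (LinearMap.baseChange ℂ φ.toLieHom.toLinearMap) μ = ⊤) :
    ∃ η : L ≃ₗ⁅ℚ⁆ L,
      Polynomial.Splits ((LinearMap.charpoly η.toLieHom.toLinearMap).map (RingHom.id ℚ)) ∧
      (∀ ψ : L ≃ₗ⁅ℚ⁆ L, (∀ x, ψ (φ x) = φ (ψ x)) → ∀ x, ψ (η x) = η (ψ x)) ∧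
      ((∀ z : ℂ,
          ((LinearMap.charpoly φ.toLieHom.toLinearMap).map (algebraMap ℚ ℂ)).IsRoot z →
            1 < ‖z‖) →
        ∀ z : ℂ,
          ((LinearMap.charpoly η.toLieHom.toLinearMap).map (algebraMap ℚ ℂ)).IsRoot z →
            1 < ‖z‖) := by
  classical
  set f : Module.End ℚ L := φ.toLieHom.toLinearMap with hfdef
  set q : ℚ[X] := LinearMap.charpoly f with hqdef
  -- 0 is not a root of the complexified characteristic polynomial of `φ`
  have h0 : ¬ ((q.map (algebraMap ℚ ℂ)).IsRoot 0) := by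
    intro h
    have h1 : q.coeff 0 = 0 := by
      have h2 := h
      rw [IsRoot, ← coeff_zero_eq_eval_zero, coeff_map] at h2
      exact (_root_.map_eq_zero (algebraMap ℚ ℂ)).1 h2
    have hdet : IsUnit (LinearMap.det φ.toLinearEquiv.toLinearMap) :=
      φ.toLinearEquiv.isUnit_det'
    have hfeq : φ.toLinearEquiv.toLinearMap = f := rfl
    rw [hfeq, LinearMap.det_eq_sign_charpoly_coeff, ← hqdef, h1, mul_zero] at hdet
    exact (not_isUnit_zero : ¬ IsUnit (0 : ℚ)) hdet
  obtain ⟨p₀, hmul, hvals⟩ := aux_interp q h0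
  set P : ℂ[X] := p₀.map (algebraMap ℚ ℂ) with hPdef
  set g : Module.End ℂ (ℂ ⊗[ℚ] L) := LinearMap.baseChange ℂ f with hgdef
  set η₀ : Module.End ℚ L := Polynomial.aeval f p₀ with hη₀def
  set Aend : Module.End ℂ (ℂ ⊗[ℚ] L) := Polynomial.aeval g P with hAdef
  -- base change of `η₀` is `P(g)`
  have hbase : LinearMap.baseChange ℂ η₀ = Aend := by
    have h1 : LinearMap.baseChange ℂ η₀ = Module.End.baseChangeHom ℚ ℂ L η₀ := rfl
    have h2 : Module.End.baseChangeHom ℚ ℂ L η₀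
        = Polynomial.aeval (Module.End.baseChangeHom ℚ ℂ L f) p₀ := by
      rw [hη₀def]
      exact (Polynomial.aeval_algHom_apply (Module.End.baseChangeHom ℚ ℂ L) f p₀).symm
    have h3 : Module.End.baseChangeHom ℚ ℂ L f = g := rfl
    rw [h1, h2, h3, hAdef, hPdef, Polynomial.aeval_map_algebraMap]
  -- eigenvalues of `g` are roots of `q` over `ℂ`
  have hroot_of_eig : ∀ {c : ℂ}, Module.End.HasEigenvalue g c →
      (q.map (algebraMap ℚ ℂ)).IsRoot c := by
    intro c hc
    have h1 := Module.End.isRoot_of_hasEigenvalue hc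
    have h2 := h1.dvd (LinearMap.minpoly_dvd_charpoly g)
    rwa [hgdef, LinearMap.charpoly_baseChange] at h2
  -- every eigenvalue of `Aend` is a value of `P` at a root of `q`
  have hAeig : ∀ {z : ℂ}, Module.End.HasEigenvalue Aend z →
      ∃ c : ℂ, (q.map (algebraMap ℚ ℂ)).IsRoot c ∧ P.eval c = z := by
    intro z hz
    obtain ⟨x, hx⟩ := hz.exists_hasEigenvector
    haveI : Nontrivial (ℂ ⊗[ℚ] L) := nontrivial_of_ne x 0 hx.2
    obtain ⟨c₀, hc₀⟩ := Module.End.exists_eigenvalue g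
    have hne : (spectrum ℂ g).Nonempty :=
      ⟨c₀, Module.End.hasEigenvalue_iff_mem_spectrum.1 hc₀⟩
    have hspec := spectrum.map_polynomial_aeval_of_nonempty g P hne
    have hz' : z ∈ spectrum ℂ Aend := Module.End.hasEigenvalue_iff_mem_spectrum.1 hz
    rw [hAdef, hspec] at hz'
    obtain ⟨c, hc, hcz⟩ := hz'
    exact ⟨c, hroot_of_eig (Module.End.HasEigenvalue.of_mem_spectrum hc), hcz⟩
  -- action of `Aend` on eigenvectors of `g`
  have hscal : ∀ (c : ℂ) (x : ℂ ⊗[ℚ] L), x ∈ Module.End.eigenspace g c →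
      Aend x = P.eval c • x := by
    intro c x hx
    rcases eq_or_ne x 0 with rfl | hne
    · simp
    · exact Module.End.aeval_apply_of_hasEigenvector ⟨hx, hne⟩
  -- `g` is compatible with the bracket
  have hglie : ∀ u v : ℂ ⊗[ℚ] L, g ⁅u, v⁆ = ⁅g u, g v⁆ := by
    intro u v
    induction u using TensorProduct.induction_on generalizing v with
    | zero => simp
    | tmul a x =>
      induction v using TensorProduct.induction_on with
      | zero => simp
      | tmul b y =>
        rw [LieAlgebra.ExtendScalars.bracket_tmul, hgdef, LinearMap.baseChange_tmul,
          LinearMap.baseChange_tmul, LinearMap.baseChange_tmul,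
          LieAlgebra.ExtendScalars.bracket_tmul,
          show f ⁅x, y⁆ = ⁅f x, f y⁆ from φ.toLieHom.map_lie x y]
      | add v₁ v₂ h₁ h₂ => rw [lie_add, map_add, h₁, h₂, map_add, lie_add]
    | add u₁ u₂ h₁ h₂ => rw [add_lie, map_add, h₁ v, h₂ v, map_add, add_lie]
  -- `Aend` is compatible with the bracket
  have hAlie : ∀ u v : ℂ ⊗[ℚ] L, Aend ⁅u, v⁆ = ⁅Aend u, Aend v⁆ := by
    set B : (ℂ ⊗[ℚ] L) →ₗ[ℂ] (ℂ ⊗[ℚ] L) →ₗ[ℂ] (ℂ ⊗[ℚ] L) :=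
      LinearMap.mk₂ ℂ (fun u v => ⁅Aend u, Aend v⁆ - Aend ⁅u, v⁆)
        (by intro m₁ m₂ n; rw [map_add, add_lie, add_lie, map_add]; abel)
        (by intro c m n; rw [map_smul, smul_lie, smul_lie, map_smul, smul_sub])
        (by intro m n₁ n₂; rw [map_add, lie_add, lie_add, map_add]; abel)
        (by intro c m n; rw [map_smul, lie_smul, lie_smul, map_smul, smul_sub]) with hBdef
    have step1 : ∀ (c : ℂ) (u : ℂ ⊗[ℚ] L), u ∈ Module.End.eigenspace g c →
        ∀ v, B u v = 0 := by
      intro c u hu v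
      have hker : ∀ d : ℂ, Module.End.eigenspace g d ≤ LinearMap.ker (B u) := by
        intro d w hw
        rw [LinearMap.mem_ker]
        have hbr : ⁅u, w⁆ ∈ Module.End.eigenspace g (c * d) := by
          rw [Module.End.mem_eigenspace_iff] at hu hw ⊢
          rw [hglie, hu, hw, smul_lie, lie_smul, smul_smul]
        have hBuw : B u w = (P.eval c * P.eval d) • ⁅u, w⁆ - P.eval (c * d) • ⁅u, w⁆ := by
          show ⁅Aend u, Aend w⁆ - Aend ⁅u, w⁆ = _
          rw [hscal c u hu, hscal d w hw, hscal (c * d) _ hbr, smul_lie, lie_smul, smul_smul]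
        rcases eq_or_ne ⁅u, w⁆ 0 with h0' | h0'
        · rw [hBuw, h0', smul_zero, smul_zero, sub_zero]
        · have hu0 : u ≠ 0 := by rintro rfl; rw [zero_lie] at h0'; exact h0' rfl
          have hw0 : w ≠ 0 := by rintro rfl; rw [lie_zero] at h0'; exact h0' rfl
          have hcd : P.eval (c * d) = P.eval c * P.eval d :=
            hmul c d
              (hroot_of_eig (Module.End.hasEigenvalue_of_hasEigenvector ⟨hu, hu0⟩))
              (hroot_of_eig (Module.End.hasEigenvalue_of_hasEigenvector ⟨hw, hw0⟩))
              (hroot_of_eig (Module.End.hasEigenvalue_of_hasEigenvector ⟨hbr, h0'⟩))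
          rw [hBuw, hcd, sub_self]
      have htop : LinearMap.ker (B u) = ⊤ := by
        rw [eq_top_iff, ← hdiag]
        exact iSup_le hker
      have : v ∈ LinearMap.ker (B u) := htop ▸ Submodule.mem_top
      rwa [LinearMap.mem_ker] at this
    have hB0 : ∀ u v, B u v = 0 := by
      intro u v
      have hker : ∀ c : ℂ, Module.End.eigenspace g c ≤ LinearMap.ker (B.flip v) := by
        intro c u' hu'
        rw [LinearMap.mem_ker, LinearMap.flip_apply]
        exact step1 c u' hu' v
      have htop : LinearMap.ker (B.flip v) = ⊤ := by
        rw [eq_top_iff, ← hdiag]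
        exact iSup_le hker
      have : u ∈ LinearMap.ker (B.flip v) := htop ▸ Submodule.mem_top
      rw [LinearMap.mem_ker, LinearMap.flip_apply] at this
      exact this
    intro u v
    have := hB0 u v
    rw [hBdef, LinearMap.mk₂_apply, sub_eq_zero] at this
    exact this.symm
  -- injectivity of the tensor embedding
  have hjinj : ∀ x : L, (1 : ℂ) ⊗ₜ[ℚ] x = 0 → x = 0 := by
    intro x hx
    set b := Module.Free.chooseBasis ℚ L with hbdef
    have hrepr : ∀ i, b.repr x i = 0 := by
      intro i
      have h1 := congrArg (fun w => (b.baseChange ℂ).repr w i) hx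
      simp only [map_zero, Finsupp.coe_zero, Pi.zero_apply] at h1
      rw [Module.Basis.baseChange_repr_tmul] at h1
      exact (smul_eq_zero.1 h1).resolve_right one_ne_zero
    have h2 : b.repr x = 0 := by ext i; exact hrepr i
    exact b.repr.injective (by rw [h2, map_zero])
  -- `η₀` is compatible with the bracket
  have hηlie : ∀ x y : L, η₀ ⁅x, y⁆ = ⁅η₀ x, η₀ y⁆ := by
    intro x y
    have hz : (1 : ℂ) ⊗ₜ[ℚ] (η₀ ⁅x, y⁆ - ⁅η₀ x, η₀ y⁆) = 0 := by
      rw [TensorProduct.tmul_sub]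
      have e1 : (1 : ℂ) ⊗ₜ[ℚ] (η₀ ⁅x, y⁆) = Aend ((1 : ℂ) ⊗ₜ[ℚ] ⁅x, y⁆) := by
        rw [← hbase, LinearMap.baseChange_tmul]
      have e2 : ((1 : ℂ) ⊗ₜ[ℚ] ⁅x, y⁆ : ℂ ⊗[ℚ] L) = ⁅(1 : ℂ) ⊗ₜ[ℚ] x, (1 : ℂ) ⊗ₜ[ℚ] y⁆ := by
        rw [LieAlgebra.ExtendScalars.bracket_tmul, one_mul]
      have e3 : (1 : ℂ) ⊗ₜ[ℚ] (⁅η₀ x, η₀ y⁆ : L)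
          = ⁅Aend ((1 : ℂ) ⊗ₜ[ℚ] x), Aend ((1 : ℂ) ⊗ₜ[ℚ] y)⁆ := by
        rw [← hbase, LinearMap.baseChange_tmul, LinearMap.baseChange_tmul,
          LieAlgebra.ExtendScalars.bracket_tmul, one_mul]
      rw [e1, e2, e3, hAlie, sub_self]
    exact sub_eq_zero.1 (hjinj _ hz)
  -- `η₀` is bijective
  have hAinj : ∀ w : ℂ ⊗[ℚ] L, Aend w = 0 → w = 0 := by
    intro w hw
    by_contra hw0
    have hev : Module.End.HasEigenvalue Aend 0 :=
      Module.End.hasEigenvalue_of_hasEigenvector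
        ⟨Module.End.mem_eigenspace_iff.2 (by rw [hw, zero_smul]), hw0⟩
    obtain ⟨c, hcroot, hcz⟩ := hAeig hev
    exact (hvals c hcroot).2.1 hcz
  have hη₀ker : ∀ x : L, η₀ x = 0 → x = 0 := by
    intro x hx
    apply hjinj
    have h1 : LinearMap.baseChange ℂ η₀ ((1 : ℂ) ⊗ₜ[ℚ] x) = 0 := by
      rw [LinearMap.baseChange_tmul, hx, TensorProduct.tmul_zero]
    rw [hbase] at h1
    exact hAinj _ h1
  have hη₀inj : Function.Injective η₀ := by
    rw [← LinearMap.ker_eq_bot]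
    exact (Submodule.eq_bot_iff _).2 fun x hx => hη₀ker x hx
  have hη₀bij : Function.Bijective η₀ :=
    ⟨hη₀inj, (LinearMap.injective_iff_surjective_of_finrank_eq_finrank rfl).1 hη₀inj⟩
  -- assemble the Lie algebra automorphism
  let ηhom : L →ₗ⁅ℚ⁆ L := { η₀ with map_lie' := fun {x y} => hηlie x y }
  have hηhombij : Function.Bijective ηhom := hη₀bij
  let η : L ≃ₗ⁅ℚ⁆ L := LieEquiv.ofBijective ηhom hηhombij
  have hηcoe : η.toLieHom.toLinearMap = η₀ := rfl
  have hηap : ∀ x : L, η x = η₀ x := fun _ => rfl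
  -- roots of the characteristic polynomial of `η₀`
  have hηroots : ∀ z : ℂ, ((LinearMap.charpoly η₀).map (algebraMap ℚ ℂ)).IsRoot z →
      ∃ c : ℂ, (q.map (algebraMap ℚ ℂ)).IsRoot c ∧ P.eval c = z := by
    intro z hz
    have h1 : (LinearMap.charpoly (LinearMap.baseChange ℂ η₀)).IsRoot z := by
      rw [LinearMap.charpoly_baseChange]
      exact hz
    rw [hbase] at h1
    exact hAeig (aux_hasEigenvalue_of_isRoot_charpoly h1)
  refine ⟨η, ?_, ?_, ?_⟩
  · -- splits over ℚ
    rw [hηcoe, Polynomial.map_id]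
    refine aux_splits (LinearMap.charpoly η₀).natDegree _ (LinearMap.charpoly_monic η₀)
      le_rfl ?_
    intro z hz
    obtain ⟨c, hcroot, hcz⟩ := hηroots z hz
    obtain ⟨a, ha⟩ := (hvals c hcroot).1
    exact ⟨a, by rw [ha, hcz]⟩
  · -- commutes with the centralizer of φ
    intro ψ hψ x
    have hcomm : Commute ψ.toLieHom.toLinearMap f := by
      apply LinearMap.ext
      intro y
      exact hψ y
    have hc2 : Commute ψ.toLieHom.toLinearMap η₀ := aux_commute hcomm p₀
    have h3 : ψ.toLieHom.toLinearMap (η₀ x) = η₀ (ψ.toLieHom.toLinearMap x) :=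
      LinearMap.congr_fun hc2 x
    rw [hηap x, hηap (ψ x)]
    exact h3
  · -- expanding
    intro hexp z hz
    rw [hηcoe] at hz
    obtain ⟨c, hcroot, hcz⟩ := hηroots z hz
    rw [← hcz]
    exact (hvals c hcroot).2.2 hexp
end

section
/- Let H be a group and let K be a normal subgroup of H that is injectively characteristic, i.e. φ(K) ⊆ K for every injective group homomorphism φ : H → H. If both K and the quotient group H/K are co-Hopfian, then H is co-Hopfian. -/
/-- Let `H` be a group and `K` a normal subgroup of `H` that is injectively characteristic.
If both `K` and `H / K` are co-Hopfian, then `H` is co-Hopfian. -/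
theorem coHopfian_of_injectively_characteristic {H : Type*} [Group H] (K : Subgroup H)
    [K.Normal]
    (hchar : ∀ φ : H →* H, Function.Injective φ → K.map φ ≤ K)
    (hK : ∀ ψ : K →* K, Function.Injective ψ → Function.Surjective ψ)
    (hQ : ∀ ψ : H ⧸ K →* H ⧸ K, Function.Injective ψ → Function.Surjective ψ) :
    ∀ φ : H →* H, Function.Injective φ → Function.Surjective φ := by
  intro φ hφ
  have hmapK : ∀ x : H, x ∈ K → φ x ∈ K := fun x hx => hchar φ hφ ⟨x, hx, rfl⟩
  -- restriction of φ to K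
  let ψ : K →* K := (φ.domRestrict K).codRestrict K (fun x => hmapK x x.2)
  have hψinj : Function.Injective ψ := by
    intro a b hab
    have : φ a = φ b := congrArg Subtype.val hab
    exact Subtype.ext (hφ this)
  have hψsurj := hK ψ hψinj
  -- φ(K) = K
  have hKsurj : ∀ k : H, k ∈ K → ∃ x ∈ K, φ x = k := by
    intro k hk
    obtain ⟨x, hx⟩ := hψsurj ⟨k, hk⟩
    exact ⟨x, x.2, congrArg Subtype.val hx⟩
  -- induced map on quotient
  have hle : K ≤ K.comap φ := fun x hx => hmapK x hx
  let φbar : H ⧸ K →* H ⧸ K := QuotientGroup.map K K φ hle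
  have hbarinj : Function.Injective φbar := by
    rw [injective_iff_map_eq_one]
    intro q hq
    obtain ⟨x, rfl⟩ := QuotientGroup.mk_surjective q
    have : (QuotientGroup.mk (φ x) : H ⧸ K) = 1 := hq
    rw [QuotientGroup.eq_one_iff] at this ⊢
    obtain ⟨y, hy, hyx⟩ := hKsurj (φ x) this
    exact hφ hyx ▸ hy
  have hbarsurj := hQ φbar hbarinj
  intro h
  obtain ⟨q, hq⟩ := hbarsurj (QuotientGroup.mk h)
  obtain ⟨x, rfl⟩ := QuotientGroup.mk_surjective q
  have : (QuotientGroup.mk (φ x) : H ⧸ K) = QuotientGroup.mk h := hq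
  rw [QuotientGroup.eq] at this
  obtain ⟨y, hy, hyx⟩ := hKsurj _ this
  exact ⟨x * y, by rw [map_mul, hyx, mul_inv_cancel_left]⟩
end
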